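/- Let x ∈ ℝ^{np} be k-block-sparse, let y = Ax + w with ‖w‖₂ ≤ ε, and let x̂ be a minimizer of ‖z‖_{b1} over all z with ‖y − Az‖₂ ≤ ε (the Block-Sparse Basis Pursuit). If ω₂(A,2k) > 0, then the Euclidean norm of the recovery error satisfies ‖x̂ − x‖₂ ≤ 2√(2k) ε / ω₂(A,2k). -/
import Mathlib


open MeasureTheory ProbabilityTheory Finset Matrix

/-- Euclidean norm of a finitely-indexed real vector. -/
noncomputable def vnorm {ι : Type*} [Fintype ι] (v : ι → ℝ) : ℝ :=
  Real.sqrt (∑ i, (v i) ^ 2)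

/-- Euclidean norm of the `i`-th block of `x ∈ ℝ^{np}` (blocks indexed by `Fin p`). -/
noncomputable def bnorm {n p : ℕ} (x : Fin p × Fin n → ℝ) (i : Fin p) : ℝ :=
  vnorm (fun j => x (i, j))

/-- Block-ℓ1 norm: `‖x‖_{b1} = ∑ i, ‖x_i‖₂`. -/
noncomputable def bl1 {n p : ℕ} (x : Fin p × Fin n → ℝ) : ℝ :=
  ∑ i, bnorm x i

/-- Block-ℓ∞ norm: `‖x‖_{b∞} = max_i ‖x_i‖₂`. -/
noncomputable def blinf {n p : ℕ} (x : Fin p × Fin n → ℝ) : ℝ :=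
  ⨆ i, bnorm x i

open scoped Classical in
/-- Block support: indices of nonzero blocks. -/
noncomputable def bsupp {n p : ℕ} (x : Fin p × Fin n → ℝ) : Finset (Fin p) :=
  Finset.univ.filter (fun i => ∃ j, x (i, j) ≠ 0)

/-- `ω₂(A,s) = inf { ‖Az‖₂ / ‖z‖_{b∞} : z ≠ 0, ‖z‖_{b1} ≤ s ‖z‖_{b∞} }`. -/
noncomputable def omega2 {m n p : ℕ} (A : Matrix (Fin m) (Fin p × Fin n) ℝ) (s : ℝ) : ℝ :=
  sInf {r | ∃ z : Fin p × Fin n → ℝ, z ≠ 0 ∧ bl1 z ≤ s * blinf z ∧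
    r = vnorm (A.mulVec z) / blinf z}

/-- `ω_{b∞}(AᵀA,s) = inf { ‖AᵀAz‖_{b∞} / ‖z‖_{b∞} : z ≠ 0, ‖z‖_{b1} ≤ s ‖z‖_{b∞} }`. -/
noncomputable def omegaBInf {m n p : ℕ} (A : Matrix (Fin m) (Fin p × Fin n) ℝ) (s : ℝ) : ℝ :=
  sInf {r | ∃ z : Fin p × Fin n → ℝ, z ≠ 0 ∧ bl1 z ≤ s * blinf z ∧
    r = blinf ((Aᵀ * A).mulVec z) / blinf z}

/-- Block ℓ1-constrained minimal singular value
`ρ_s(A) = inf { ‖Az‖₂ / ‖z‖₂ : z ≠ 0, ‖z‖_{b1}² ≤ s ‖z‖₂² }`. -/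
noncomputable def rhoCMSV {m n p : ℕ} (A : Matrix (Fin m) (Fin p × Fin n) ℝ) (s : ℝ) : ℝ :=
  sInf {r | ∃ z : Fin p × Fin n → ℝ, z ≠ 0 ∧ (bl1 z) ^ 2 ≤ s * (vnorm z) ^ 2 ∧
    r = vnorm (A.mulVec z) / vnorm z}

/-- Spectral norm (largest singular value) of a real matrix, as the ℓ2→ℓ2 operator norm. -/
noncomputable def specNorm {ι κ : Type*} [Fintype ι] [Fintype κ] (M : Matrix ι κ ℝ) : ℝ :=
  sSup {r | ∃ v : κ → ℝ, vnorm v ≤ 1 ∧ r = vnorm (M.mulVec v)}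

/-- The `j`-th column block (of `n` columns) of a matrix with `np` columns. -/
def colBlock {ι : Type*} {n p : ℕ} (Q : Matrix ι (Fin p × Fin n) ℝ) (j : Fin p) :
    Matrix ι (Fin n) ℝ := Matrix.of fun r c => Q r (j, c)

/-- The `l`-th row block (of `n` rows) of a matrix with `np` rows. -/
def rowBlock {κ : Type*} {n p : ℕ} (P : Matrix (Fin p × Fin n) κ ℝ) (l : Fin p) :
    Matrix (Fin n) κ ℝ := Matrix.of fun r c => P (l, r) c

/-- `δ_{ij} Iₙ`. -/
def deltaId (n : ℕ) {p : ℕ} (i j : Fin p) : Matrix (Fin n) (Fin n) ℝ :=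
  if i = j then 1 else 0

/-- Orlicz ψ₂ norm of a scalar random variable. -/
noncomputable def psi2 {Ω : Type*} [MeasurableSpace Ω] (μ : Measure Ω) (Y : Ω → ℝ) : ℝ :=
  sInf {t | 0 < t ∧ ∫ ω, Real.exp ((Y ω) ^ 2 / t ^ 2) ∂μ ≤ 2}

lemma vnorm_nonneg' {ι : Type*} [Fintype ι] (v : ι → ℝ) : 0 ≤ vnorm v :=
  Real.sqrt_nonneg _

lemma vnorm_eq_norm' {ι : Type*} [Fintype ι] (v : ι → ℝ) :
    vnorm v = ‖(WithLp.equiv 2 (ι → ℝ)).symm v‖ := by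
  simp [vnorm, EuclideanSpace.norm_eq, Real.norm_eq_abs, sq_abs]

lemma vnorm_triangle' {ι : Type*} [Fintype ι] (a b : ι → ℝ) :
    vnorm (a + b) ≤ vnorm a + vnorm b := by
  simp only [vnorm_eq_norm']
  exact norm_add_le ((WithLp.equiv 2 (ι → ℝ)).symm a) ((WithLp.equiv 2 (ι → ℝ)).symm b)

lemma vnorm_neg' {ι : Type*} [Fintype ι] (v : ι → ℝ) : vnorm (-v) = vnorm v := by
  simp [vnorm]

lemma bnorm_nonneg' {n p : ℕ} (x : Fin p × Fin n → ℝ) (i : Fin p) : 0 ≤ bnorm x i :=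
  Real.sqrt_nonneg _

lemma bnorm_triangle' {n p : ℕ} (a b : Fin p × Fin n → ℝ) (i : Fin p) :
    bnorm (a + b) i ≤ bnorm a i + bnorm b i :=
  vnorm_triangle' (fun j => a (i, j)) (fun j => b (i, j))

lemma blinf_nonneg' {n p : ℕ} (x : Fin p × Fin n → ℝ) : 0 ≤ blinf x :=
  Real.iSup_nonneg (fun i => bnorm_nonneg' x i)

lemma bnorm_le_blinf' {n p : ℕ} (x : Fin p × Fin n → ℝ) (i : Fin p) :
    bnorm x i ≤ blinf x :=
  le_ciSup (Set.Finite.bddAbove (Set.finite_range _)) i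

/-- Corollary 2, BS-BP: `‖x̂ - x‖₂ ≤ 2√(2k) ε / ω₂(A, 2k)`. -/
theorem stmt8 {m n p k : ℕ} (A : Matrix (Fin m) (Fin p × Fin n) ℝ)
    (x : Fin p × Fin n → ℝ) (w y : Fin m → ℝ) (xhat : Fin p × Fin n → ℝ) (ε : ℝ)
    (hsparse : (bsupp x).card ≤ k)
    (hy : y = A.mulVec x + w)
    (hw : vnorm w ≤ ε)
    (hfeas : vnorm (y - A.mulVec xhat) ≤ ε)
    (hmin : ∀ z : Fin p × Fin n → ℝ, vnorm (y - A.mulVec z) ≤ ε → bl1 xhat ≤ bl1 z)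
    (hω : 0 < omega2 A (2 * k)) :
    vnorm (xhat - x) ≤ 2 * Real.sqrt (2 * k) * ε / omega2 A (2 * k) := by
  classical
  have hε0 : (0 : ℝ) ≤ ε := le_trans (vnorm_nonneg' w) hw
  by_cases hz : xhat - x = 0
  · rw [hz]
    have h0 : vnorm (0 : Fin p × Fin n → ℝ) = 0 := by simp [vnorm]
    rw [h0]
    apply div_nonneg _ hω.le
    positivity
  · set h := xhat - x with hhdef
    -- feasibility of x
    have hyx : y - A.mulVec x = w := by rw [hy]; abel
    have hxfeas : vnorm (y - A.mulVec x) ≤ ε := by rw [hyx]; exact hw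
    have hcone0 : bl1 xhat ≤ bl1 x := hmin x hxfeas
    set S := bsupp x with hSdef
    have hSx : ∀ i ∉ S, ∀ j, x (i, j) = 0 := by
      intro i hi j
      by_contra hne
      exact hi (by simp [hSdef, bsupp]; exact ⟨j, hne⟩)
    -- on Sᶜ, bnorm xhat = bnorm h
    have hcompl : ∀ i ∈ Sᶜ, bnorm xhat i = bnorm h i := by
      intro i hi
      have hi' : i ∉ S := Finset.mem_compl.mp hi
      unfold bnorm vnorm
      congr 1
      apply Finset.sum_congr rfl
      intro j _
      show xhat (i, j) ^ 2 = h (i, j) ^ 2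
      have hh : h (i, j) = xhat (i, j) - x (i, j) := rfl
      rw [hh, hSx i hi' j, sub_zero]
    -- reverse triangle on S : bnorm x i ≤ bnorm xhat i + bnorm h i
    have hrev : ∀ i, bnorm x i ≤ bnorm xhat i + bnorm h i := by
      intro i
      have := bnorm_triangle' xhat (-h) i
      have hxe : xhat + (-h) = x := by rw [hhdef]; abel
      rw [hxe] at this
      calc bnorm x i ≤ bnorm xhat i + bnorm (-h) i := this
        _ = bnorm xhat i + bnorm h i := by
            congr 1
            exact vnorm_neg' (fun j => h (i, j))
    -- bl1 x is supported on S
    have hbl1x : bl1 x = ∑ i ∈ S, bnorm x i := by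
      rw [bl1, ← Finset.sum_add_sum_compl S (bnorm x)]
      have : ∑ i ∈ Sᶜ, bnorm x i = 0 := by
        apply Finset.sum_eq_zero
        intro i hi
        have hx0 : ∀ j, x (i, j) = 0 := hSx i (Finset.mem_compl.mp hi)
        unfold bnorm vnorm
        simp [hx0]
      rw [this, add_zero]
    -- cone condition
    have hkey : ∑ i ∈ Sᶜ, bnorm h i ≤ ∑ i ∈ S, bnorm h i := by
      have e1 : bl1 xhat = ∑ i ∈ S, bnorm xhat i + ∑ i ∈ Sᶜ, bnorm xhat i := by
        rw [bl1, Finset.sum_add_sum_compl]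
      have e2 : ∑ i ∈ Sᶜ, bnorm xhat i = ∑ i ∈ Sᶜ, bnorm h i :=
        Finset.sum_congr rfl hcompl
      have e3 : ∑ i ∈ S, bnorm x i - ∑ i ∈ S, bnorm h i ≤ ∑ i ∈ S, bnorm xhat i := by
        rw [← Finset.sum_sub_distrib]
        apply Finset.sum_le_sum
        intro i _
        linarith [hrev i]
      rw [hbl1x] at hcone0
      rw [e1, e2] at hcone0
      linarith
    have hbsum : ∑ i ∈ S, bnorm h i ≤ (k : ℝ) * blinf h := by
      calc ∑ i ∈ S, bnorm h i ≤ ∑ _i ∈ S, blinf h :=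
            Finset.sum_le_sum (fun i _ => bnorm_le_blinf' h i)
        _ = (S.card : ℝ) * blinf h := by rw [Finset.sum_const, nsmul_eq_mul]
        _ ≤ (k : ℝ) * blinf h := by
            apply mul_le_mul_of_nonneg_right _ (blinf_nonneg' h)
            exact_mod_cast hsparse
    have hcone : bl1 h ≤ (2 * k : ℝ) * blinf h := by
      have : bl1 h = ∑ i ∈ S, bnorm h i + ∑ i ∈ Sᶜ, bnorm h i := by
        rw [bl1, Finset.sum_add_sum_compl]
      rw [this]
      nlinarith [hkey, hbsum]
    -- blinf h > 0
    have hblinfpos : 0 < blinf h := by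
      obtain ⟨q, hq⟩ : ∃ q, h q ≠ 0 := by
        by_contra hc
        push_neg at hc
        exact hz (funext hc)
      have h1 : 0 < bnorm h q.1 := by
        rw [bnorm, vnorm]
        apply Real.sqrt_pos.mpr
        have hle : (h (q.1, q.2)) ^ 2 ≤ ∑ j, (h (q.1, j)) ^ 2 :=
          Finset.single_le_sum (f := fun j => (h (q.1, j)) ^ 2)
            (fun j _ => sq_nonneg _) (Finset.mem_univ q.2)
        have h2 : 0 < (h (q.1, q.2)) ^ 2 := by positivity
        linarith
      exact lt_of_lt_of_le h1 (bnorm_le_blinf' h q.1)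
    -- ω₂ bound: h is in the constraint set
    have hmem : vnorm (A.mulVec h) / blinf h ∈
        {r | ∃ z : Fin p × Fin n → ℝ, z ≠ 0 ∧ bl1 z ≤ (2 * k : ℝ) * blinf z ∧
          r = vnorm (A.mulVec z) / blinf z} := ⟨h, hz, hcone, rfl⟩
    have hbdd : BddBelow {r | ∃ z : Fin p × Fin n → ℝ, z ≠ 0 ∧
        bl1 z ≤ (2 * k : ℝ) * blinf z ∧ r = vnorm (A.mulVec z) / blinf z} := by
      refine ⟨0, ?_⟩
      rintro r ⟨z, _, _, rfl⟩
      exact div_nonneg (vnorm_nonneg' _) (blinf_nonneg' z)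
    have hωle : omega2 A (2 * k) ≤ vnorm (A.mulVec h) / blinf h := csInf_le hbdd hmem
    -- ‖A h‖ ≤ 2 ε
    have hAh : vnorm (A.mulVec h) ≤ 2 * ε := by
      have hdecomp : A.mulVec h = -(y - A.mulVec xhat) + (y - A.mulVec x) := by
        rw [hhdef, Matrix.mulVec_sub]
        abel
      calc vnorm (A.mulVec h)
          ≤ vnorm (-(y - A.mulVec xhat)) + vnorm (y - A.mulVec x) := by
            rw [hdecomp]; exact vnorm_triangle' _ _
        _ = vnorm (y - A.mulVec xhat) + vnorm (y - A.mulVec x) := by rw [vnorm_neg']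
        _ ≤ ε + ε := add_le_add hfeas hxfeas
        _ = 2 * ε := by ring
    -- blinf h ≤ 2ε/ω
    have hblinf_le : blinf h ≤ 2 * ε / omega2 A (2 * k) := by
      rw [le_div_iff₀ hω]
      have := (le_div_iff₀ hblinfpos).mp hωle
      linarith
    -- ‖h‖₂ ≤ √(2k) blinf h
    have hvb : vnorm h ≤ Real.sqrt (2 * k) * blinf h := by
      have hsum : ∑ q : Fin p × Fin n, (h q) ^ 2 = ∑ i, (bnorm h i) ^ 2 := by
        rw [Fintype.sum_prod_type]
        apply Finset.sum_congr rfl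
        intro i _
        rw [bnorm, vnorm, Real.sq_sqrt (Finset.sum_nonneg (fun j _ => sq_nonneg _))]
      have hle : ∑ i, (bnorm h i) ^ 2 ≤ (2 * k : ℝ) * (blinf h) ^ 2 := by
        calc ∑ i, (bnorm h i) ^ 2 ≤ ∑ i, blinf h * bnorm h i := by
              apply Finset.sum_le_sum
              intro i _
              rw [sq]
              exact mul_le_mul_of_nonneg_right (bnorm_le_blinf' h i) (bnorm_nonneg' h i)
          _ = blinf h * bl1 h := by rw [bl1, Finset.mul_sum]
          _ ≤ blinf h * ((2 * k : ℝ) * blinf h) :=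
              mul_le_mul_of_nonneg_left hcone (blinf_nonneg' h)
          _ = (2 * k : ℝ) * (blinf h) ^ 2 := by ring
      calc vnorm h = Real.sqrt (∑ q, (h q) ^ 2) := rfl
        _ ≤ Real.sqrt ((2 * k : ℝ) * (blinf h) ^ 2) := by
            apply Real.sqrt_le_sqrt
            rw [hsum]; exact hle
        _ = Real.sqrt (2 * k) * blinf h := by
            rw [Real.sqrt_mul (by positivity), Real.sqrt_sq (blinf_nonneg' h)]
    calc vnorm h ≤ Real.sqrt (2 * k) * blinf h := hvb
      _ ≤ Real.sqrt (2 * k) * (2 * ε / omega2 A (2 * k)) :=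
          mul_le_mul_of_nonneg_left hblinf_le (Real.sqrt_nonneg _)
      _ = 2 * Real.sqrt (2 * k) * ε / omega2 A (2 * k) := by ring
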